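/- For every prime p ≥ 5 and every positive integer N, we have pH_{pN} − H_N ≡ pN²H_{p−1} modulo p⁴ℤ_p. -/

import Mathlib

/-- The `n`-th harmonic number `H_n = ∑_{i=1}^n 1/i`, as a rational number. -/
def H (n : ℕ) : ℚ := ∑ i ∈ Finset.range n, (1 : ℚ) / (i + 1)

open Finset

lemma sum_range_mul' {M : Type*} [AddCommMonoid M] (f : ℕ → M) (p : ℕ) :
    ∀ N, ∑ k ∈ range (p * N), f k = ∑ q ∈ range N, ∑ r ∈ range p, f (q * p + r)
  | 0 => by simp
  | (N+1) => by
    rw [Nat.mul_succ, sum_range_add, sum_range_mul' f p N, sum_range_succ]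
    congr 1
    exact sum_congr rfl fun r _ => by rw [mul_comm]

lemma gauss_odd : ∀ n : ℕ, ∑ q ∈ range n, (2*q+1) = n^2
  | 0 => by simp
  | (n+1) => by rw [sum_range_succ, gauss_odd n]; ring

lemma zmod_key (p N : ℕ) (hp : p.Prime) (hp5 : 5 ≤ p) :
    ∑ k ∈ (range (p*N)).filter (fun k => ¬ p ∣ (k+1)), ((k : ZMod (p^3)) + 1)⁻¹
      = (N : ZMod (p^3))^2 * ∑ r ∈ range (p-1), ((r : ZMod (p^3)) + 1)⁻¹ := by
  haveI : NeZero (p^3) := ⟨pow_ne_zero 3 hp.pos.ne'⟩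
  set R := ZMod (p^3) with hR
  have hp3 : ((p:R))^3 = 0 := by
    rw [← Nat.cast_pow]; exact ZMod.natCast_self _
  have hunit : ∀ u : ℕ, ¬ p ∣ u → IsUnit (u : R) := by
    intro u hu
    rw [ZMod.isUnit_iff_coprime]
    exact Nat.Coprime.pow_right 3 ((hp.coprime_iff_not_dvd.mpr hu).symm)
  set w : ℕ → R := fun u => (u : R)⁻¹ with hwdef
  have hw : ∀ u : ℕ, ¬ p ∣ u → (u : R) * w u = 1 := fun u hu =>
    ZMod.mul_inv_of_unit _ (hunit u hu)
  have hndvd : ∀ r, r < p - 1 → ¬ p ∣ (r+1) := by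
    intro r hr hdvd
    have := Nat.le_of_dvd (Nat.succ_pos r) hdvd
    omega
  have hkey : ∀ u : ℕ, ¬ p ∣ u → ∀ a : R,
      (a * p + u)⁻¹ = w u - a*p*(w u)^2 + a^2*p^2*(w u)^3 := by
    intro u hu a
    apply ZMod.inv_eq_of_mul_eq_one
    linear_combination (1 - a*(p:R)*(w u) + a^2*(p:R)^2*(w u)^2) * hw u hu
      + a^3*(w u)^3 * hp3
  have hpair : ∀ r, r < p - 1 →
      w (p-1-r) = -(w (r+1) + p * (w (r+1))^2 + p^2 * (w (r+1))^3) := by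
    intro r hr
    apply ZMod.inv_eq_of_mul_eq_one
    rw [show p - 1 - r = p - (r+1) from by omega,
      Nat.cast_sub (by omega : r + 1 ≤ p)]
    linear_combination (1 + (p:R)*(w (r+1)) + (p:R)^2*(w (r+1))^2) * hw (r+1) (hndvd r hr)
      - (w (r+1))^3 * hp3
  set HH : R := ∑ r ∈ range (p-1), w (r+1) with hHH
  set S2 : R := ∑ r ∈ range (p-1), (w (r+1))^2 with hS2def
  set S3 : R := ∑ r ∈ range (p-1), (w (r+1))^3 with hS3def
  have reflect : ∀ g : ℕ → R,
      ∑ r ∈ range (p-1), g (p-1-r) = ∑ r ∈ range (p-1), g (r+1) := by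
    intro g
    rw [← Finset.sum_range_reflect (fun j => g (j+1)) (p-1)]
    exact sum_congr rfl fun r hr => by
      congr 1
      have := mem_range.mp hr
      omega
  have hS3 : (p:R)^2 * S3 = 0 := by
    have cube : ∀ x : R, (p:R)^2 * (-(x + p*x^2 + p^2*x^3))^3 = -((p:R)^2 * x^3) := by
      intro x
      linear_combination (-(3*x^4 + 6*(p:R)*x^5 + 7*(p:R)^2*x^6 + 6*(p:R)^3*x^7
        + 3*(p:R)^4*x^8 + (p:R)^5*x^9)) * hp3
    have h1 : (p:R)^2 * S3 = -((p:R)^2 * S3) := by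
      calc (p:R)^2 * S3 = ∑ r ∈ range (p-1), (p:R)^2 * (w (p-1-r))^3 := by
            rw [reflect (fun u => (p:R)^2 * (w u)^3), hS3def, mul_sum]
        _ = ∑ r ∈ range (p-1), -((p:R)^2 * (w (r+1))^3) := by
            refine sum_congr rfl fun r hr => ?_
            rw [hpair r (mem_range.mp hr)]
            exact cube _
        _ = -((p:R)^2 * S3) := by rw [hS3def, mul_sum, ← sum_neg_distrib]
    have h2 : ((2:ℕ):R) * ((p:R)^2 * S3) = 0 := by push_cast; linear_combination h1
    have h2u : IsUnit ((2:ℕ) : R) := hunit 2 (fun h => by have := Nat.le_of_dvd two_pos h; omega)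
    calc (p:R)^2 * S3 = (((2:ℕ):R)⁻¹ * ((2:ℕ):R)) * ((p:R)^2 * S3) := by
          rw [ZMod.inv_mul_of_unit _ h2u, one_mul]
      _ = ((2:ℕ):R)⁻¹ * (((2:ℕ):R) * ((p:R)^2 * S3)) := by ring
      _ = 0 := by rw [h2, mul_zero]
  have hH2 : (p:R) * S2 = -(2 * HH) := by
    have e1 : ∑ r ∈ range (p-1), w (p-1-r) = HH := reflect w
    have e2 : ∑ r ∈ range (p-1), w (p-1-r) = -HH - (p:R)*S2 - (p:R)^2*S3 := by
      rw [hHH, hS2def, hS3def, mul_sum, mul_sum, ← sum_neg_distrib,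
        ← sum_sub_distrib, ← sum_sub_distrib]
      refine sum_congr rfl fun r hr => ?_
      rw [hpair r (mem_range.mp hr)]; ring
    linear_combination e2 - e1 - hS3
  have hconv : ∑ r ∈ range (p-1), ((r : R) + 1)⁻¹ = HH := by
    rw [hHH]
    refine sum_congr rfl fun r _ => ?_
    rw [hwdef]
    congr 1
    push_cast
    ring
  have split : ∀ F : ℕ → R, ∑ r ∈ range p, F r = (∑ r ∈ range (p-1), F r) + F (p-1) := by
    intro F
    rw [show range p = range ((p-1)+1) from congrArg range (by omega), sum_range_succ]
  have inner : ∀ q : ℕ, ∑ r ∈ range p,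
      (if ¬ p ∣ (q*p + r + 1) then (((q*p+r : ℕ):R) + 1)⁻¹ else 0)
      = HH - (q:R)*(p:R)*S2 + (q:R)^2*(p:R)^2*S3 := by
    intro q
    rw [split]
    have h1 : q*p + (p-1) + 1 = p*(q+1) := by
      have h0 : p - 1 + 1 = p := Nat.succ_pred_eq_of_pos hp.pos
      calc q*p + (p-1) + 1 = q*p + ((p-1)+1) := by omega
        _ = p*(q+1) := by rw [h0]; ring
    have hlast : (if ¬ p ∣ (q*p + (p-1) + 1) then (((q*p+(p-1) : ℕ):R) + 1)⁻¹ else 0) = 0 := by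
      rw [if_neg]
      rw [not_not, h1]
      exact dvd_mul_right p (q+1)
    rw [hlast, add_zero]
    trans (∑ r ∈ range (p-1),
        (w (r+1) - (q:R)*(p:R)*(w (r+1))^2 + (q:R)^2*(p:R)^2*(w (r+1))^3))
    · refine sum_congr rfl fun r hr => ?_
      have hr' := mem_range.mp hr
      have hcond : ¬ p ∣ (q*p + r + 1) := by
        intro hdvd
        have h2 : p ∣ (q*p + r + 1) - q*p := Nat.dvd_sub hdvd (dvd_mul_left p q)
        have h3 : q*p + r + 1 - q*p = r + 1 := by omega
        exact hndvd r hr' (h3 ▸ h2)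
      rw [if_pos hcond,
        show (((q*p+r : ℕ):R) + 1) = ((q:R) * (p:R) + ((r+1 : ℕ):R)) from by push_cast; erw [Nat.cast_mul]; ring,
        hkey (r+1) (hndvd r hr') (q:R)]
    · rw [sum_add_distrib, sum_sub_distrib, ← mul_sum, ← mul_sum, hHH, hS2def, hS3def]
  calc ∑ k ∈ (range (p*N)).filter (fun k => ¬ p ∣ (k+1)), ((k : R) + 1)⁻¹
      = ∑ k ∈ range (p*N), (if ¬ p ∣ (k+1) then ((k : R) + 1)⁻¹ else 0) := sum_filter _ _
    _ = ∑ q ∈ range N, ∑ r ∈ range p,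
        (if ¬ p ∣ (q*p + r + 1) then (((q*p+r : ℕ):R) + 1)⁻¹ else 0) :=
      sum_range_mul' (fun k => if ¬ p ∣ (k+1) then ((k : R) + 1)⁻¹ else 0) p N
    _ = ∑ q ∈ range N, (HH - (q:R)*(p:R)*S2 + (q:R)^2*(p:R)^2*S3) :=
      sum_congr rfl fun q _ => inner q
    _ = ∑ q ∈ range N, ((1:R) + 2*(q:R)) * HH := by
      refine sum_congr rfl fun q _ => ?_
      linear_combination (-(q:R))*hH2 + (q:R)^2*hS3
    _ = (∑ q ∈ range N, ((1:R) + 2*(q:R))) * HH := by rw [sum_mul]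
    _ = (N:R)^2 * HH := by
      congr 1
      calc ∑ q ∈ range N, ((1:R) + 2*(q:R))
          = ((∑ q ∈ range N, (2*q+1) : ℕ) : R) := by
            push_cast
            exact (sum_congr rfl fun (q : ℕ) _ => (by erw [Nat.cast_succ, Nat.cast_mul, Nat.cast_two]; ring : (1:R) + 2*(q:R) = ((2*q+1 : ℕ) : R))).trans (Nat.cast_sum (range N) (fun q : ℕ => (2*q+1 : ℕ))).symm
        _ = (N:R)^2 := by rw [gauss_odd N]; push_cast; ring
    _ = (N:R)^2 * ∑ r ∈ range (p-1), ((r : R) + 1)⁻¹ := by rw [hconv]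

lemma sum_range_split {M : Type*} [AddCommMonoid M] (F : ℕ → M) {p : ℕ} (hp : 0 < p) :
    ∑ r ∈ range p, F r = (∑ r ∈ range (p-1), F r) + F (p-1) := by
  rw [show range p = range ((p-1)+1) from congrArg range (by omega), sum_range_succ]

theorem p_mul_harmonic_sub_congr (p N : ℕ) (hp : p.Prime) (hp5 : 5 ≤ p) (hN : 1 ≤ N) :
    padicNorm p ((p : ℚ) * H (p * N) - H N - (p : ℚ) * (N : ℚ) ^ 2 * H (p - 1))
      ≤ (p : ℚ) ^ (-4 : ℤ) := by
  haveI : Fact p.Prime := ⟨hp⟩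
  set S : Finset ℕ := (range (p*N)).filter (fun k => ¬ p ∣ (k+1)) with hSdef
  have hpN : p ≤ p * N := by calc p = p * 1 := (mul_one p).symm
                                 _ ≤ p * N := Nat.mul_le_mul_left p hN
  have hndvd : ∀ r, r < p - 1 → ¬ p ∣ (r+1) := by
    intro r hr hdvd
    have := Nat.le_of_dvd (Nat.succ_pos r) hdvd
    omega
  have hrS : ∀ r ∈ range (p-1), r ∈ S := by
    intro r hr
    have hr' := mem_range.mp hr
    rw [hSdef, mem_filter, mem_range]
    exact ⟨by omega, hndvd r hr'⟩
  have h1div : ∀ q : ℕ, q*p + (p-1) + 1 = p*(q+1) := by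
    intro q
    have h0 : p - 1 + 1 = p := Nat.succ_pred_eq_of_pos hp.pos
    calc q*p + (p-1) + 1 = q*p + ((p-1)+1) := by omega
      _ = p*(q+1) := by rw [h0]; ring
  have hcond : ∀ q r : ℕ, r < p - 1 → ¬ p ∣ (q*p + r + 1) := by
    intro q r hr' hdvd
    have h2 : p ∣ (q*p + r + 1) - q*p := Nat.dvd_sub hdvd (dvd_mul_left p q)
    have h3 : q*p + r + 1 - q*p = r + 1 := by omega
    exact hndvd r hr' (h3 ▸ h2)
  -- Claim 0 : p H(pN) - H N = p ∑_{k ∈ S} 1/(k+1)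
  have claim0 : (p:ℚ) * H (p*N) - H N = (p:ℚ) * ∑ k ∈ S, (1:ℚ)/((k:ℚ)+1) := by
    have hdivpart : ∑ k ∈ (range (p*N)).filter (fun k => p ∣ (k+1)), (1:ℚ)/((k:ℚ)+1)
        = (1/(p:ℚ)) * H N := by
      rw [sum_filter, sum_range_mul' (fun k => if p ∣ (k+1) then (1:ℚ)/((k:ℚ)+1) else 0) p N]
      have inner : ∀ q : ℕ, ∑ r ∈ range p,
          (if p ∣ (q*p + r + 1) then (1:ℚ)/(((q*p+r : ℕ):ℚ)+1) else 0)
          = (1/(p:ℚ)) * (1/((q:ℚ)+1)) := by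
        intro q
        rw [sum_range_split _ hp.pos]
        rw [Finset.sum_eq_zero (fun r hr => if_neg (hcond q r (mem_range.mp hr))), zero_add]
        rw [if_pos (by rw [show q*p + (p-1) + 1 = p*(q+1) from h1div q]; exact dvd_mul_right p (q+1))]
        rw [show (((q*p+(p-1) : ℕ):ℚ)+1) = (p:ℚ)*((q:ℚ)+1) from by
          calc (((q*p+(p-1) : ℕ):ℚ)+1) = (((q*p+(p-1)+1 : ℕ)):ℚ) := by push_cast; ring
            _ = ((p*(q+1) : ℕ) : ℚ) := by rw [h1div q]
            _ = (p:ℚ)*((q:ℚ)+1) := by push_cast; ring]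
        rw [div_mul_div_comm, one_mul]
      rw [sum_congr rfl fun q _ => inner q, H, mul_sum]
    have hsplit : H (p*N) = (∑ k ∈ S, (1:ℚ)/((k:ℚ)+1))
        + ∑ k ∈ (range (p*N)).filter (fun k => p ∣ (k+1)), (1:ℚ)/((k:ℚ)+1) := by
      rw [H, hSdef, ← sum_filter_add_sum_filter_not (range (p*N)) (fun k => ¬ p ∣ (k+1))
        (fun i => (1:ℚ)/((i:ℚ)+1))]
      simp only [not_not]
    rw [hsplit, hdivpart]
    have hp0 : (p:ℚ) ≠ 0 := Nat.cast_ne_zero.mpr hp.pos.ne'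
    field_simp
    ring
  set Y : ℚ := (∑ k ∈ S, (1:ℚ)/((k:ℚ)+1)) - (N:ℚ)^2 * H (p-1) with hYdef
  have hX : (p:ℚ) * H (p*N) - H N - (p:ℚ)*(N:ℚ)^2*H (p-1) = (p:ℚ) * Y := by
    rw [hYdef]; linear_combination claim0
  -- the big denominator and numerator
  set P : ℕ → ℕ := fun k => ∏ j ∈ S.erase k, (j+1) with hPdef
  set D : ℕ := ∏ j ∈ S, (j+1) with hDdef
  set Z : ℤ := (∑ k ∈ S, (P k : ℤ)) - (N:ℤ)^2 * ∑ r ∈ range (p-1), (P r : ℤ) with hZdef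
  have hDk : ∀ k ∈ S, (k+1) * P k = D := fun k hk => Finset.mul_prod_erase S (fun j => j+1) hk
  have hSk : ∀ k ∈ S, ¬ p ∣ (k+1) := by
    intro k hk
    exact (mem_filter.mp hk).2
  have hDQ : (D:ℚ) ≠ 0 := by
    rw [hDdef]
    push_cast
    exact (Finset.prod_pos (fun j _ => by positivity)).ne'
  have claimD : (D:ℚ) * Y = (Z:ℚ) := by
    rw [hYdef, hZdef, H]
    push_cast
    rw [mul_sub, mul_sum, mul_left_comm, mul_sum]
    have e1 : ∀ k ∈ S, (D:ℚ) * ((1:ℚ)/((k:ℚ)+1)) = (P k : ℚ) := by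
      intro k hk
      have hc : ((k:ℚ)+1) ≠ 0 := by positivity
      have h4 : ((k:ℚ)+1) * (P k : ℚ) = (D:ℚ) := by exact_mod_cast congrArg (Nat.cast : ℕ → ℚ) (hDk k hk)
      field_simp
      linear_combination -h4
    rw [sum_congr rfl e1, sum_congr rfl fun r hr => e1 r (hrS r hr)]
  have claimZ : ((p:ℤ)^3) ∣ Z := by
    have hcast : ((p:ℤ)^3) = ((p^3 : ℕ) : ℤ) := by push_cast; ring
    rw [hcast, ← ZMod.intCast_zmod_eq_zero_iff_dvd]
    haveI : NeZero (p^3) := ⟨pow_ne_zero 3 hp.pos.ne'⟩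
    have hunit : ∀ u : ℕ, ¬ p ∣ u → IsUnit (u : ZMod (p^3)) := by
      intro u hu
      rw [ZMod.isUnit_iff_coprime]
      exact Nat.Coprime.pow_right 3 ((hp.coprime_iff_not_dvd.mpr hu).symm)
    have hPk : ∀ k ∈ S, ((P k : ℕ) : ZMod (p^3)) = ((k : ZMod (p^3))+1)⁻¹ * (D : ZMod (p^3)) := by
      intro k hk
      have h4 : ((k : ZMod (p^3))+1) * (P k : ℕ) = (D : ZMod (p^3)) := by
        have := congrArg (Nat.cast : ℕ → ZMod (p^3)) (hDk k hk)
        push_cast at this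
        linear_combination this
      have hu : IsUnit ((k : ZMod (p^3))+1) := by
        have := hunit (k+1) (hSk k hk)
        push_cast at this
        exact this
      calc ((P k : ℕ) : ZMod (p^3))
          = (((k : ZMod (p^3))+1)⁻¹ * ((k : ZMod (p^3))+1)) * (P k : ℕ) := by
            rw [ZMod.inv_mul_of_unit _ hu, one_mul]
        _ = ((k : ZMod (p^3))+1)⁻¹ * (D : ZMod (p^3)) := by rw [mul_assoc, h4]
    calc ((Z : ℤ) : ZMod (p^3))
        = ((∑ k ∈ S, ((k : ZMod (p^3))+1)⁻¹)
            - (N : ZMod (p^3))^2 * ∑ r ∈ range (p-1), ((r : ZMod (p^3))+1)⁻¹)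
            * (D : ZMod (p^3)) := by
          rw [hZdef]
          push_cast
          rw [sum_congr rfl hPk, sum_congr rfl fun r hr => hPk r (hrS r hr), ← sum_mul, ← sum_mul]
          ring
      _ = 0 := by
          rw [hSdef] at *
          rw [zmod_key p N hp hp5, sub_self, zero_mul]
  have claimDnd : ¬ (p:ℤ) ∣ (D:ℤ) := by
    rw [Int.natCast_dvd_natCast]
    refine hp.coprime_iff_not_dvd.mp ?_
    rw [hDdef]
    exact Nat.Coprime.prod_right fun j hj => hp.coprime_iff_not_dvd.mpr (hSk j hj)
  -- norm computation
  have hY : Y = (Z:ℚ) / (D:ℚ) := by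
    field_simp
    linear_combination claimD
  have hnormD : padicNorm p ((D:ℤ):ℚ) = 1 := (padicNorm.int_eq_one_iff _).mpr claimDnd
  have hnormZ : padicNorm p ((Z:ℤ):ℚ) ≤ (p:ℚ) ^ (-(3:ℕ) : ℤ) := by
    rw [← padicNorm.dvd_iff_norm_le]
    exact_mod_cast claimZ
  have hnormY : padicNorm p Y ≤ (p:ℚ) ^ (-(3:ℕ) : ℤ) := by
    rw [hY, padicNorm.div]
    rw [show ((D:ℚ)) = ((D:ℤ):ℚ) from by push_cast; ring] at *
    rw [hnormD, div_one]
    exact hnormZ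
  rw [hX, padicNorm.mul, padicNorm.padicNorm_p hp.one_lt]
  have hppos : (0:ℚ) < (p:ℚ) := by exact_mod_cast hp.pos
  calc (p:ℚ)⁻¹ * padicNorm p Y ≤ (p:ℚ)⁻¹ * (p:ℚ) ^ (-(3:ℕ) : ℤ) := by
        apply mul_le_mul_of_nonneg_left hnormY
        positivity
    _ = (p:ℚ) ^ (-4 : ℤ) := by
        rw [← zpow_neg_one, ← zpow_add₀ hppos.ne']
        norm_num
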